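/- Let (Λ, Γ) be a random variable on a compact set K ⊂ [0,1]^2, let (λ_0, γ_0) ∈ K be the unique maximizer on K of (λ,γ) ↦ λγ^α for some α ≥ 1 with λ_0 γ_0^α > 0, and let F : [0,1]^2 → ℝ be continuous with F(λ_0, γ_0) < 0. Then for v sufficiently large, E[ Λ^v Γ^{⌊αv⌋} F(Λ, Γ) ] < 0. -/

import Mathlib

open MeasureTheory Real Set
open Filter

private lemma mono_lower {α a lam gam : ℝ} (hα : 0 < α) (hg1 : gam ≤ 1)
    (h0g : 0 ≤ gam) (ha : 0 < a) (hle : a ≤ lam * gam ^ α) (v m : ℕ)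
    (hm : (m : ℝ) ≤ α * v) : a ^ v ≤ lam ^ v * gam ^ m := by
  have hgpos : 0 < gam := by
    rcases h0g.lt_or_eq with h | h
    · exact h
    · exfalso; rw [← h, Real.zero_rpow hα.ne', mul_zero] at hle; linarith
  have hlpos : 0 < lam := by
    by_contra h
    push_neg at h
    nlinarith [Real.rpow_nonneg h0g α, Real.rpow_le_one h0g hg1 hα.le]
  have h1 : gam ^ (α * v) ≤ gam ^ (m : ℝ) :=
    Real.rpow_le_rpow_of_exponent_ge hgpos hg1 hm
  have h2 : (lam * gam ^ α) ^ v = lam ^ v * gam ^ (α * v) := by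
    rw [mul_pow, ← Real.rpow_natCast (gam ^ α) v, ← Real.rpow_mul h0g]
  calc a ^ v ≤ (lam * gam ^ α) ^ v := pow_le_pow_left₀ ha.le hle v
    _ = lam ^ v * gam ^ (α * v) := h2
    _ ≤ lam ^ v * gam ^ (m : ℝ) :=
        mul_le_mul_of_nonneg_left h1 (pow_nonneg hlpos.le v)
    _ = lam ^ v * gam ^ m := by rw [Real.rpow_natCast]

private lemma mono_upper {α lam gam : ℝ} (hα : 0 < α) (h0l : 0 ≤ lam) (hl1 : lam ≤ 1)
    (h0g : 0 ≤ gam) (hg1 : gam ≤ 1) (v m : ℕ)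
    (hm : α * ((v - 1 : ℕ) : ℝ) ≤ m) (hm1 : 1 ≤ m) :
    lam ^ v * gam ^ m ≤ (lam * gam ^ α) ^ (v - 1) := by
  rcases h0g.lt_or_eq with hgpos | h
  · have h1 : gam ^ (m : ℝ) ≤ gam ^ (α * ((v - 1 : ℕ) : ℝ)) :=
      Real.rpow_le_rpow_of_exponent_ge hgpos hg1 hm
    have h2 : (lam * gam ^ α) ^ (v - 1) = lam ^ (v - 1) * gam ^ (α * ((v - 1 : ℕ) : ℝ)) := by
      rw [mul_pow, ← Real.rpow_natCast (gam ^ α) (v - 1), ← Real.rpow_mul h0g]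
    have h3 : lam ^ v ≤ lam ^ (v - 1) := pow_le_pow_of_le_one h0l hl1 (Nat.sub_le v 1)
    calc lam ^ v * gam ^ m = lam ^ v * gam ^ (m : ℝ) := by rw [Real.rpow_natCast]
      _ ≤ lam ^ (v - 1) * gam ^ (α * ((v - 1 : ℕ) : ℝ)) :=
          mul_le_mul h3 h1 (Real.rpow_nonneg h0g _) (pow_nonneg h0l _)
      _ = (lam * gam ^ α) ^ (v - 1) := h2.symm
  · rw [← h, zero_pow (by omega : m ≠ 0), mul_zero]
    positivity

/-- Let `(Λ, Γ) = X` be a random variable whose law has compact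
support `K ⊆ [0,1]²`, let `(λ₀, γ₀) ∈ K` be the unique maximizer on `K` of
`(λ,γ) ↦ λγ^α` for some `α ≥ 1`, with `λ₀γ₀^α > 0`, and let `F : [0,1]² → ℝ` be
continuous with `F(λ₀, γ₀) < 0`.  Then for `v` sufficiently large,
`E[Λ^v Γ^{⌊αv⌋} F(Λ, Γ)] < 0`. -/
theorem expectation_eventually_negative
    {Ω : Type*} [MeasureSpace Ω] [IsProbabilityMeasure (volume : Measure Ω)]
    (X : Ω → ℝ × ℝ) (hX : Measurable X)
    (K : Set (ℝ × ℝ)) (hK : IsCompact K) (hKsub : K ⊆ Icc (0:ℝ) 1 ×ˢ Icc (0:ℝ) 1)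
    (hsupp : ∀ᵐ ω, X ω ∈ K)
    (hfull : ∀ U : Set (ℝ × ℝ), IsOpen U → (U ∩ K).Nonempty → 0 < volume (X ⁻¹' U))
    (α : ℝ) (hα : 1 ≤ α)
    (z₀ : ℝ × ℝ) (hz₀K : z₀ ∈ K)
    (hmax : ∀ w ∈ K, w.1 * w.2 ^ α ≤ z₀.1 * z₀.2 ^ α)
    (huniq : ∀ w ∈ K, w.1 * w.2 ^ α = z₀.1 * z₀.2 ^ α → w = z₀)
    (hpos : 0 < z₀.1 * z₀.2 ^ α)
    (F : ℝ × ℝ → ℝ) (hF : Continuous F) (hFneg : F z₀ < 0) :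
    ∃ V : ℕ, ∀ v : ℕ, V ≤ v →
      ∫ ω, (X ω).1 ^ v * (X ω).2 ^ (Nat.floor (α * v)) * F (X ω) < 0 := by
  have hα0 : (0:ℝ) < α := lt_of_lt_of_le one_pos hα
  have hf_cont : Continuous fun w : ℝ × ℝ => w.1 * w.2 ^ α :=
    continuous_fst.mul (continuous_snd.rpow_const fun _ => Or.inr hα0.le)
  set M : ℝ := z₀.1 * z₀.2 ^ α with hM
  set c : ℝ := -F z₀ / 2 with hc
  have hc_pos : 0 < c := by rw [hc]; linarith
  set U : Set (ℝ × ℝ) := {w | F w < -c} with hU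
  have hU_open : IsOpen U := isOpen_lt hF continuous_const
  have hz₀U : z₀ ∈ U := by simp only [hU, mem_setOf_eq, hc]; linarith
  -- the bound r away from the region U
  obtain ⟨r, hr0, hrM, hrS⟩ : ∃ r, 0 ≤ r ∧ r < M ∧ ∀ w ∈ K \ U, w.1 * w.2 ^ α ≤ r := by
    rcases eq_empty_or_nonempty (K \ U) with hS | hS
    · exact ⟨0, le_refl 0, hpos, by simp [hS]⟩
    · obtain ⟨w₁, hw₁S, hw₁max⟩ := (hK.diff hU_open).exists_isMaxOn hS hf_cont.continuousOn
      refine ⟨max (w₁.1 * w₁.2 ^ α) 0, le_max_right _ _, max_lt ?_ hpos, fun w hw =>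
        le_trans (hw₁max hw) (le_max_left _ _)⟩
      rcases lt_or_eq_of_le (hmax w₁ hw₁S.1) with h | h
      · exact h
      · exact absurd (huniq w₁ hw₁S.1 h ▸ hz₀U) hw₁S.2
  set a : ℝ := (M + r) / 2 with ha_def
  have hra : r < a := by rw [ha_def]; linarith
  have haM : a < M := by rw [ha_def]; linarith
  have ha0 : 0 < a := lt_of_le_of_lt hr0 hra
  set U' : Set (ℝ × ℝ) := {w | a < w.1 * w.2 ^ α} ∩ U with hU'
  have hU'_open : IsOpen U' := (isOpen_lt continuous_const hf_cont).inter hU_open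
  have hz₀U' : z₀ ∈ U' := ⟨haM, hz₀U⟩
  set p : ℝ := (volume (X ⁻¹' U')).toReal with hp_def
  have hp : 0 < p := ENNReal.toReal_pos (hfull U' hU'_open ⟨z₀, hz₀U', hz₀K⟩).ne'
    (measure_ne_top _ _)
  -- Bound on F over [0,1]²
  obtain ⟨C0, hC0⟩ := (isCompact_Icc.prod isCompact_Icc :
      IsCompact (Icc (0:ℝ) 1 ×ˢ Icc (0:ℝ) 1)).exists_bound_of_continuousOn hF.continuousOn
  set C : ℝ := max C0 0 with hC_def
  have hC_nonneg : 0 ≤ C := le_max_right _ _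
  have hC : ∀ w ∈ K, |F w| ≤ C := fun w hw =>
    le_trans (by simpa using hC0 w (hKsub hw)) (le_max_left _ _)
  -- choose V
  have hra' : r / a < 1 := (div_lt_one ha0).2 hra
  have htend : Tendsto (fun n : ℕ => C * (r / a) ^ n) atTop (nhds 0) := by
    simpa using (tendsto_pow_atTop_nhds_zero_of_lt_one (div_nonneg hr0 ha0.le)
      hra').const_mul C
  obtain ⟨N, hN⟩ := (htend.eventually_lt_const (show (0:ℝ) < c * p * a by positivity)).exists_forall_of_atTop
  refine ⟨N + 2, fun v hv => ?_⟩
  have hv2 : 2 ≤ v := by omega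
  set m : ℕ := Nat.floor (α * v) with hm_def
  have hv2' : (2:ℝ) ≤ (v:ℝ) := by exact_mod_cast hv2
  have hm_le : (m : ℝ) ≤ α * v := Nat.floor_le (by positivity)
  have hm1 : 1 ≤ m := Nat.le_floor (by push_cast; nlinarith)
  have hm_ge : α * ((v - 1 : ℕ) : ℝ) ≤ (m : ℝ) := by
    have h1 : α * (v:ℝ) - 1 < (m : ℝ) := Nat.sub_one_lt_floor (α * v)
    have h2 : ((v - 1 : ℕ) : ℝ) = (v : ℝ) - 1 := by
      push_cast [Nat.cast_sub (by omega : 1 ≤ v)]; ring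
    rw [h2]; nlinarith
  set g : Ω → ℝ := fun ω => (X ω).1 ^ v * (X ω).2 ^ m * F (X ω) with hg_def
  have hg_meas : AEStronglyMeasurable g volume :=
    ((((measurable_fst.comp hX).pow_const v).mul
      ((measurable_snd.comp hX).pow_const m)).mul
      (hF.measurable.comp hX)).aestronglyMeasurable
  have hbound : ∀ᵐ ω, ‖g ω‖ ≤ C := by
    filter_upwards [hsupp] with ω hω
    obtain ⟨⟨hl0, hl1⟩, hg0, hg1⟩ := hKsub hω
    have h1 : |(X ω).1 ^ v * (X ω).2 ^ m| ≤ 1 := by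
      rw [abs_of_nonneg (by positivity)]
      calc (X ω).1 ^ v * (X ω).2 ^ m ≤ 1 * 1 :=
        mul_le_mul (pow_le_one₀ hl0 hl1) (pow_le_one₀ hg0 hg1) (by positivity) one_pos.le
      _ = 1 := one_mul 1
    calc ‖g ω‖ = |(X ω).1 ^ v * (X ω).2 ^ m| * |F (X ω)| := by
          rw [hg_def, Real.norm_eq_abs, abs_mul]
      _ ≤ 1 * C := mul_le_mul h1 (hC _ hω) (abs_nonneg _) one_pos.le
      _ = C := one_mul C
  have hg_int : Integrable g := (integrable_const C).mono' hg_meas hbound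
  set A : Set Ω := X ⁻¹' U' with hA_def
  have hA : MeasurableSet A := hX hU'_open.measurableSet
  have hsplit : ∫ ω, g ω = (∫ ω in A, g ω) + ∫ ω in Aᶜ, g ω :=
    (integral_add_compl hA hg_int).symm
  have hA_bound : ∫ ω in A, g ω ≤ p * (-(c * a ^ v)) := by
    have hae : ∀ᵐ ω ∂(volume.restrict A), g ω ≤ -(c * a ^ v) := by
      rw [ae_restrict_iff' hA]
      filter_upwards [hsupp] with ω hωK hωA
      obtain ⟨⟨hl0, hl1⟩, hg0, hg1⟩ := hKsub hωK
      obtain ⟨hfa, hFU⟩ := hωA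
      have h1 : a ^ v ≤ (X ω).1 ^ v * (X ω).2 ^ m :=
        mono_lower hα0 hg1 hg0 ha0 (le_of_lt hfa) v m hm_le
      have h2 : F (X ω) ≤ -c := le_of_lt hFU
      have ht0 : 0 ≤ (X ω).1 ^ v * (X ω).2 ^ m := le_trans (pow_pos ha0 v).le h1
      calc g ω ≤ ((X ω).1 ^ v * (X ω).2 ^ m) * (-c) :=
            mul_le_mul_of_nonneg_left h2 ht0
        _ ≤ a ^ v * (-c) := mul_le_mul_of_nonpos_right h1 (by linarith)
        _ = -(c * a ^ v) := by ring
    calc ∫ ω in A, g ω ≤ ∫ _ω in A, (-(c * a ^ v)) :=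
          integral_mono_ae hg_int.restrict (integrable_const _) hae
      _ = p * (-(c * a ^ v)) := by
          rw [setIntegral_const, smul_eq_mul]; rfl
  have hAc_bound : ∫ ω in Aᶜ, g ω ≤ C * r ^ (v - 1) := by
    have hae : ∀ᵐ ω ∂(volume.restrict Aᶜ), g ω ≤ C * r ^ (v - 1) := by
      rw [ae_restrict_iff' hA.compl]
      filter_upwards [hsupp] with ω hωK _hωA
      obtain ⟨⟨hl0, hl1⟩, hg0, hg1⟩ := hKsub hωK
      by_cases hωU : X ω ∈ U
      · have hmono : 0 ≤ (X ω).1 ^ v * (X ω).2 ^ m := by positivity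
        have hFneg' : F (X ω) < -c := hωU
        have : g ω ≤ 0 := mul_nonpos_of_nonneg_of_nonpos hmono (by linarith)
        calc g ω ≤ 0 := this
          _ ≤ C * r ^ (v - 1) := by positivity
      · have hwS : X ω ∈ K \ U := ⟨hωK, hωU⟩
        have h1 : (X ω).1 ^ v * (X ω).2 ^ m ≤ ((X ω).1 * (X ω).2 ^ α) ^ (v - 1) :=
          mono_upper hα0 hl0 hl1 hg0 hg1 v m hm_ge hm1
        have h2 : ((X ω).1 * (X ω).2 ^ α) ^ (v - 1) ≤ r ^ (v - 1) :=
          pow_le_pow_left₀ (by positivity) (hrS _ hwS) _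
        calc g ω ≤ |g ω| := le_abs_self _
          _ = ((X ω).1 ^ v * (X ω).2 ^ m) * |F (X ω)| := by
              rw [hg_def, abs_mul, abs_of_nonneg (by positivity)]
          _ ≤ r ^ (v - 1) * C :=
              mul_le_mul (h1.trans h2) (hC _ hωK) (abs_nonneg _) (pow_nonneg hr0 _)
          _ = C * r ^ (v - 1) := mul_comm _ _
    calc ∫ ω in Aᶜ, g ω ≤ ∫ _ω in Aᶜ, (C * r ^ (v - 1)) :=
          integral_mono_ae hg_int.restrict (integrable_const _) hae
      _ = (volume Aᶜ).toReal * (C * r ^ (v - 1)) := by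
          rw [setIntegral_const, smul_eq_mul]; rfl
      _ ≤ 1 * (C * r ^ (v - 1)) := by
          refine mul_le_mul_of_nonneg_right ?_ (by positivity)
          have h := prob_le_one (μ := (volume : Measure Ω)) (s := Aᶜ)
          simpa using ENNReal.toReal_mono (by norm_num) h
      _ = C * r ^ (v - 1) := one_mul _
  have hkey : C * r ^ (v - 1) < c * p * a ^ v := by
    have hNv := hN (v - 1) (by omega)
    have hav : a ^ v = a * a ^ (v - 1) := by
      rw [← pow_succ']; congr 1; omega
    have heq : C * r ^ (v - 1) = C * (r / a) ^ (v - 1) * a ^ (v - 1) := by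
      rw [div_pow]; field_simp
    calc C * r ^ (v - 1) = C * (r / a) ^ (v - 1) * a ^ (v - 1) := heq
      _ < (c * p * a) * a ^ (v - 1) := mul_lt_mul_of_pos_right hNv (pow_pos ha0 _)
      _ = c * p * a ^ v := by rw [hav]; ring
  have hfinal : ∫ ω, g ω < 0 := by
    have h1 : p * (-(c * a ^ v)) = -(c * p * a ^ v) := by ring
    rw [hsplit]
    have := hA_bound
    rw [h1] at this
    linarith
  exact hfinal
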